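/- Let (g,γ) be a construction pair on an abelian group (X,+), and equip ℤ × X with the multiplication (i,x)·(j,y) = (i+j, g^{−j}(x)+y+∑_{k∈I(i+j,−j)} g^{−k}(γ(x,y))). Then this multiplication satisfies the Moufang identity u·((v·w)·u) = (u·v)·(w·u) for all u,v,w ∈ ℤ × X. -/

import Mathlib

/-- The interval `I(i,j)` of integers: `∅` if `i = j`, `{i,…,j-1}` if `i < j`,
and `{j,…,i-1}` if `j < i`. -/
noncomputable def I (i j : ℤ) : Finset ℤ := Finset.Ico (min i j) (max i j)

/-- A construction pair `(g, γ)` on an abelian group `(X, +)`. -/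
structure IsConstructionPair {X : Type*} [AddCommGroup X]
    (g : Equiv.Perm X) (γ : X → X → X) : Prop where
  symm : ∀ x y, γ x y = γ y x
  alt : ∀ x, γ x x = 0
  add_left : ∀ x y z, γ (x + y) z = γ x z + γ y z
  add_right : ∀ x y z, γ x (y + z) = γ x y + γ x z
  c1 : ∀ x y, g⁻¹ (g x + g y)
      = x + y + γ x y + g⁻¹ (γ x y) + g⁻¹ (g⁻¹ (γ x y))
  c2 : ∀ x y z, γ (γ x y) z = 0
  c3 : ∀ x y, g⁻¹ (γ x y) = γ (g x) y

/-- The multiplication of `ℤ ⋉_{(g,γ)} X` on `ℤ × X`: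
`(i,x)·(j,y) = (i+j, g^{-j}(x) + y + ∑_{k ∈ I(i+j,-j)} g^{-k}(γ(x,y)))`. -/
noncomputable def cmul {X : Type*} [AddCommGroup X] (g : Equiv.Perm X) (γ : X → X → X) :
    ℤ × X → ℤ × X → ℤ × X :=
  fun u v =>
    (u.1 + v.1,
      (g ^ (-v.1)) u.2 + v.2 + ∑ k ∈ I (u.1 + v.1) (-v.1), (g ^ (-k)) (γ u.2 v.2))

theorem Equiv.Perm.apply_inv_self {α : Type*} (f : Equiv.Perm α) (x : α) : f (f⁻¹ x) = x :=
  f.apply_symm_apply x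

theorem Equiv.Perm.inv_apply_self {α : Type*} (f : Equiv.Perm α) (x : α) : f⁻¹ (f x) = x :=
  f.symm_apply_apply x

namespace CP
set_option linter.unusedSectionVars false

variable {X : Type*} [AddCommGroup X] (g : Equiv.Perm X) (γ : X → X → X)

noncomputable def Esum (i j : ℤ) (c : X) : X := ∑ k ∈ I i j, (g ^ (-k)) c
noncomputable def Jsum (i j : ℤ) (c : X) : X := ∑ k ∈ Finset.Ico i j, (g ^ (-k)) c

def IsCent (c : X) : Prop := ∀ z, γ c z = 0

variable {g γ}
variable (h : IsConstructionPair g γ)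

omit h in
lemma zpow_apply_add (m n : ℤ) (x : X) : (g ^ (m + n)) x = (g ^ m) ((g ^ n) x) := by
  rw [zpow_add, Equiv.Perm.mul_apply]

section basics
include h

lemma gzl (x : X) : γ 0 x = 0 := by
  have := h.add_left 0 0 x
  simp only [add_zero, zero_add] at this
  exact (left_eq_add.mp this)

lemma gzr (x : X) : γ x 0 = 0 := by rw [h.symm]; exact gzl h x

lemma two_gamma (x y : X) : γ x y + γ x y = 0 := by
  have := h.alt (x + y)
  rw [h.add_left, h.add_right, h.add_right, h.alt, h.alt, h.symm y x] at this
  simpa using this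

/-- `γ (g⁻¹ u) y = g (γ u y)` -/
lemma c3inv (u y : X) : γ (g⁻¹ u) y = g (γ u y) := by
  have := h.c3 (g⁻¹ u) y
  rw [Equiv.Perm.apply_inv_self] at this
  rw [← this, Equiv.Perm.apply_inv_self]

lemma g_zero : g 0 = 0 := by
  have h1 : γ (g⁻¹ 0) (g⁻¹ 0) = g (γ 0 (g⁻¹ 0)) := c3inv h 0 (g⁻¹ 0)
  rw [h.alt, gzl h] at h1
  exact h1.symm

lemma ginv_zero : g⁻¹ (0 : X) = 0 := by
  conv_lhs => rw [← g_zero h]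
  exact Equiv.symm_apply_apply _ _

lemma zpow_zero_apply : ∀ n : ℤ, (g ^ n) (0 : X) = 0 := by
  intro n
  induction n using Int.induction_on with
  | zero => simp
  | succ i ih => rw [zpow_add_one, Equiv.Perm.mul_apply, g_zero h, ih]
  | pred i ih => rw [zpow_sub_one, Equiv.Perm.mul_apply, ginv_zero h, ih]

lemma c3' : ∀ (n : ℤ) (x y : X), γ ((g ^ n) x) y = (g ^ (-n)) (γ x y) := by
  intro n
  induction n using Int.induction_on with
  | zero => simp
  | succ i ih =>
    intro x y
    rw [zpow_add_one, Equiv.Perm.mul_apply, ih, ← h.c3,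
      show (-((i:ℤ)+1)) = (-(i:ℤ)) + (-1) by ring, zpow_add, Equiv.Perm.mul_apply, zpow_neg_one]
  | pred i ih =>
    intro x y
    rw [zpow_sub_one, Equiv.Perm.mul_apply, ih, c3inv h,
      show (-((-(i:ℤ)) - 1)) = (- -(i:ℤ)) + 1 by ring, zpow_add, Equiv.Perm.mul_apply, zpow_one]

lemma c3r (n : ℤ) (x y : X) : γ x ((g ^ n) y) = (g ^ (-n)) (γ x y) := by
  rw [h.symm, c3' h, h.symm]

/-- `(g^n) (γ x y)` is a `γ`-value. -/
lemma zpow_gamma (n : ℤ) (x y : X) : (g ^ n) (γ x y) = γ ((g ^ (-n)) x) y := by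
  rw [c3' h, neg_neg]

end basics

section cent
include h

lemma cent_gamma (x y : X) : IsCent γ (γ x y) := fun z => h.c2 x y z

lemma cent_zero : IsCent γ (0 : X) := fun z => gzl h z

lemma cent_add {c d : X} (hc : IsCent γ c) (hd : IsCent γ d) : IsCent γ (c + d) := by
  intro z; rw [h.add_left, hc, hd, add_zero]

lemma cent_zpow {c : X} (hc : IsCent γ c) (n : ℤ) : IsCent γ ((g ^ n) c) := by
  intro z; rw [c3' h, hc, zpow_zero_apply h]

lemma cent_right {c : X} (hc : IsCent γ c) (z : X) : γ z c = 0 := by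
  rw [h.symm]; exact hc z

/-- one-step additivity with a central element. -/
lemma ginv_add_cent {c : X} (hc : IsCent γ c) (a : X) :
    g⁻¹ (a + c) = g⁻¹ a + g⁻¹ c := by
  have h1 := h.c1 (g⁻¹ a) (g⁻¹ c)
  rw [Equiv.Perm.apply_inv_self, Equiv.Perm.apply_inv_self] at h1
  have h2 : γ (g⁻¹ a) (g⁻¹ c) = 0 := by
    rw [h.symm, c3inv h, hc, g_zero h]
  rw [h2, ginv_zero h, ginv_zero h] at h1
  simpa using h1

lemma g_add_cent {c : X} (hc : IsCent γ c) (a : X) :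
    g (a + c) = g a + g c := by
  have h1 := h.c1 a c
  have h2 : γ a c = 0 := cent_right h hc a
  rw [h2, ginv_zero h, ginv_zero h] at h1
  simp only [add_zero] at h1
  calc g (a + c) = g (g⁻¹ (g a + g c)) := by rw [h1]
    _ = g a + g c := Equiv.Perm.apply_inv_self _ _

lemma zpow_add_cent (n : ℤ) {c : X} (hc : IsCent γ c) (a : X) :
    (g ^ n) (a + c) = (g ^ n) a + (g ^ n) c := by
  induction n using Int.induction_on with
  | zero => simp
  | succ i ih =>
    rw [show ((i:ℤ)+1) = 1 + (i:ℤ) by ring, zpow_add, zpow_one, Equiv.Perm.mul_apply,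
      Equiv.Perm.mul_apply, Equiv.Perm.mul_apply, ih, g_add_cent h (cent_zpow h hc _)]
  | pred i ih =>
    rw [show (-(i:ℤ)-1) = (-1) + (-(i:ℤ)) by ring, zpow_add, zpow_neg_one, Equiv.Perm.mul_apply,
      Equiv.Perm.mul_apply, Equiv.Perm.mul_apply, ih, ginv_add_cent h (cent_zpow h hc _)]

end cent

section esum

def Tors (g : Equiv.Perm X) (c : X) : Prop := ∀ k : ℤ, (g ^ k) c + (g ^ k) c = 0

variable (g) in
noncomputable def Ssum (i j : ℤ) (c : X) : X := Jsum g i j c - Jsum g j i c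

lemma Ico_succ_insert {a b : ℤ} (hab : a ≤ b) :
    Finset.Ico a (b + 1) = insert b (Finset.Ico a b) := by
  ext k; simp only [Finset.mem_Ico, Finset.mem_insert]; omega

lemma Ico_bot_insert {a b : ℤ} (hab : a < b) :
    Finset.Ico a b = insert a (Finset.Ico (a + 1) b) := by
  ext k; simp only [Finset.mem_Ico, Finset.mem_insert]; omega

lemma Jsum_empty {i j : ℤ} (hij : j ≤ i) (c : X) : Jsum g i j c = 0 := by
  unfold Jsum; rw [Finset.Ico_eq_empty (by omega), Finset.sum_empty]

lemma Ssum_succ (i j : ℤ) (c : X) :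
    Ssum g i (j + 1) c = Ssum g i j c + (g ^ (-j)) c := by
  rcases le_or_gt i j with hij | hij
  · have h1 : Jsum g i (j + 1) c = (g ^ (-j)) c + Jsum g i j c := by
      unfold Jsum
      rw [Ico_succ_insert hij, Finset.sum_insert (by simp)]
    rw [Ssum, Ssum, h1, Jsum_empty (i := j + 1) (j := i) (by omega),
      Jsum_empty (i := j) (j := i) (by omega)]
    abel
  · have h1 : Jsum g j i c = (g ^ (-j)) c + Jsum g (j + 1) i c := by
      unfold Jsum
      rw [Ico_bot_insert hij, Finset.sum_insert (by simp)]
    rw [Ssum, Ssum, h1, Jsum_empty (i := i) (j := j + 1) (by omega),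
      Jsum_empty (i := i) (j := j) (by omega)]
    abel

lemma Ssum_chasles (i j l : ℤ) (c : X) :
    Ssum g i j c + Ssum g j l c = Ssum g i l c := by
  have diag : ∀ m : ℤ, Ssum g m m c = 0 := by
    intro m; rw [Ssum, sub_self]
  rcases le_total j l with H | H
  · refine Int.le_induction (motive := fun l _ => Ssum g i j c + Ssum g j l c = Ssum g i l c)
      ?_ ?_ l H
    · show Ssum g i j c + Ssum g j j c = Ssum g i j c
      rw [diag, add_zero]
    · intro n _ ih
      show Ssum g i j c + Ssum g j (n+1) c = Ssum g i (n+1) c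
      rw [Ssum_succ, Ssum_succ, ← add_assoc, ih]
  · refine Int.le_induction_down (motive := fun l _ => Ssum g i j c + Ssum g j l c = Ssum g i l c)
      ?_ ?_ l H
    · show Ssum g i j c + Ssum g j j c = Ssum g i j c
      rw [diag, add_zero]
    · intro n _ ih
      show Ssum g i j c + Ssum g j (n-1) c = Ssum g i (n-1) c
      have e1 : Ssum g j (n - 1) c = Ssum g j n c - (g ^ (-(n - 1))) c := by
        have e := Ssum_succ (g := g) j (n - 1) c
        rw [sub_add_cancel] at e
        rw [e]; abel
      have e2 : Ssum g i (n - 1) c = Ssum g i n c - (g ^ (-(n - 1))) c := by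
        have e := Ssum_succ (g := g) i (n - 1) c
        rw [sub_add_cancel] at e
        rw [e]; abel
      rw [e1, e2, ← ih]; abel

lemma Jsum_self {c : X} (hc : Tors g c) (i j : ℤ) : Jsum g i j c + Jsum g i j c = 0 := by
  unfold Jsum
  rw [← Finset.sum_add_distrib]
  exact Finset.sum_eq_zero fun k _ => hc (-k)

lemma Esum_eq_JJ (i j : ℤ) (c : X) : Esum g i j c = Jsum g i j c + Jsum g j i c := by
  rcases le_total i j with hij | hij
  · rw [Esum, I, min_eq_left hij, max_eq_right hij, Jsum_empty hij, add_zero]; rfl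
  · rw [Esum, I, min_eq_right hij, max_eq_left hij, Jsum_empty hij, zero_add]; rfl

lemma Esum_eq_Ssum {c : X} (hc : Tors g c) (i j : ℤ) : Esum g i j c = Ssum g i j c := by
  rw [Esum_eq_JJ, Ssum, sub_eq_add_neg]
  congr 1
  exact (neg_eq_of_add_eq_zero_left (Jsum_self hc j i)).symm

lemma Esum_chasles {c : X} (hc : Tors g c) (i j l : ℤ) :
    Esum g i j c + Esum g j l c = Esum g i l c := by
  rw [Esum_eq_Ssum hc, Esum_eq_Ssum hc, Esum_eq_Ssum hc, Ssum_chasles]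

lemma Esum_symm (i j : ℤ) (c : X) : Esum g i j c = Esum g j i c := by
  unfold Esum I; rw [min_comm, max_comm]

lemma Esum_diag (i : ℤ) (c : X) : Esum g i i c = 0 := by
  unfold Esum I; simp

lemma Esum_congr {i j i' j' : ℤ} (hi : i = i') (hj : j = j') (c : X) :
    Esum g i j c = Esum g i' j' c := by rw [hi, hj]

lemma Esum_reindex (i j n : ℤ) (F : ℤ → X) :
    ∑ k ∈ I (i - n) (j - n), F k = ∑ k ∈ I i j, F (k - n) := by
  unfold I
  rw [min_sub_sub_right, max_sub_sub_right]
  rw [show (min i j - n) = min i j + (-n) by ring, show (max i j - n) = max i j + (-n) by ring]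
  rw [← Finset.map_add_right_Ico, Finset.sum_map]
  exact Finset.sum_congr rfl fun k _ => by
    rw [addRightEmbedding_apply, show k + -n = k - n by ring]

lemma Esum_apply_zpow (i j n : ℤ) (c : X) :
    Esum g i j ((g ^ n) c) = Esum g (i - n) (j - n) c := by
  unfold Esum
  rw [Esum_reindex]
  exact Finset.sum_congr rfl fun k _ => by
    rw [← Equiv.Perm.mul_apply, ← zpow_add, show -k + n = -(k - n) by ring]

section needh
include h

lemma tors_gamma (x y : X) : Tors g (γ x y) := by
  intro k; rw [zpow_gamma h]; exact two_gamma h _ _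

lemma cent_sum {s : Finset ℤ} {f : ℤ → X} (hf : ∀ k ∈ s, IsCent γ (f k)) :
    IsCent γ (∑ k ∈ s, f k) := by
  classical
  induction s using Finset.induction_on with
  | empty => simpa using cent_zero h
  | insert _ _ hx ih =>
    rw [Finset.sum_insert hx]
    exact cent_add h (hf _ (Finset.mem_insert_self _ _))
      (ih fun k hk => hf k (Finset.mem_insert_of_mem hk))

lemma zpow_sum_cent (n : ℤ) {s : Finset ℤ} {f : ℤ → X} (hf : ∀ k ∈ s, IsCent γ (f k)) :
    (g ^ n) (∑ k ∈ s, f k) = ∑ k ∈ s, (g ^ n) (f k) := by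
  classical
  induction s using Finset.induction_on with
  | empty => simpa using zpow_zero_apply h n
  | insert _ _ hx ih =>
    rw [Finset.sum_insert hx, Finset.sum_insert hx, add_comm, add_comm ((g^n) (f _)),
      zpow_add_cent h n (hf _ (Finset.mem_insert_self _ _)),
      ih fun k hk => hf k (Finset.mem_insert_of_mem hk)]

lemma cent_Esum {c : X} (hc : IsCent γ c) (i j : ℤ) : IsCent γ (Esum g i j c) :=
  cent_sum h fun k _ => cent_zpow h hc (-k)

lemma zpow_Esum {c : X} (hc : IsCent γ c) (n i j : ℤ) :
    (g ^ n) (Esum g i j c) = Esum g (i - n) (j - n) c := by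
  unfold Esum
  rw [zpow_sum_cent h n fun k _ => cent_zpow h hc (-k), Esum_reindex]
  exact Finset.sum_congr rfl fun k _ => by
    rw [← Equiv.Perm.mul_apply, ← zpow_add, show n + -k = -(k - n) by ring]

lemma Esum_add {c d : X} (hd : IsCent γ d) (i j : ℤ) :
    Esum g i j (c + d) = Esum g i j c + Esum g i j d := by
  unfold Esum
  rw [← Finset.sum_add_distrib]
  exact Finset.sum_congr rfl fun k _ => zpow_add_cent h (-k) hd c

end needh

end esum

omit h in
lemma Esum_1_neg2 (c : X) : Esum g 1 (-2) c = g (g c) + g c + c := by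
  unfold Esum I
  rw [show min (1:ℤ) (-2) = -2 by norm_num, show max (1:ℤ) (-2) = 1 by norm_num]
  rw [show Finset.Ico (-2:ℤ) 1 = {-2,-1,0} from by ext k; simp [Finset.mem_Ico]; omega]
  rw [Finset.sum_insert (by decide), Finset.sum_insert (by decide), Finset.sum_singleton]
  rw [show (-(-2:ℤ)) = 1 + 1 by norm_num, zpow_apply_add, zpow_one]
  norm_num
  abel

omit h in
lemma Esum_neg1_2 (c : X) : Esum g (-1) 2 c = g c + c + g⁻¹ c := by
  unfold Esum I
  rw [show min (-1:ℤ) 2 = -1 by norm_num, show max (-1:ℤ) 2 = 2 by norm_num]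
  rw [show Finset.Ico (-1:ℤ) 2 = {-1,0,1} from by ext k; simp [Finset.mem_Ico]; omega]
  rw [Finset.sum_insert (by decide), Finset.sum_insert (by decide), Finset.sum_singleton]
  norm_num
  abel

section gadd
include h

lemma cent_inv {c : X} (hc : IsCent γ c) : IsCent γ (g⁻¹ c) := by
  intro z; rw [c3inv h, hc, g_zero h]

lemma gamma_inv_apply (x y : X) : g⁻¹ (γ x y) = γ (g x) y := h.c3 x y

lemma gamma_apply (x y : X) : g (γ x y) = γ (g⁻¹ x) y := (c3inv h x y).symm

lemma ginv_add (a b : X) : g⁻¹ (a + b) = g⁻¹ a + g⁻¹ b + Esum g 1 (-2) (γ a b) := by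
  have h2 : γ (g⁻¹ a) (g⁻¹ b) = g (g (γ a b)) := by
    rw [c3inv h, h.symm a, c3inv h, h.symm b a]
  have h1 := h.c1 (g⁻¹ a) (g⁻¹ b)
  rw [Equiv.Perm.apply_inv_self, Equiv.Perm.apply_inv_self, h2,
    Equiv.Perm.inv_apply_self, Equiv.Perm.inv_apply_self] at h1
  rw [h1, Esum_1_neg2]
  abel

lemma g_add1 (a b : X) : g (a + b) = g a + g b + Esum g (-1) 2 (γ a b) := by
  have h1 := h.c1 a b
  have hre : a + b + γ a b + g⁻¹ (γ a b) + g⁻¹ (g⁻¹ (γ a b))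
      = (a + b) + (γ a b + g⁻¹ (γ a b) + g⁻¹ (g⁻¹ (γ a b))) := by abel
  rw [hre] at h1
  have hD : IsCent γ (γ a b + g⁻¹ (γ a b) + g⁻¹ (g⁻¹ (γ a b))) :=
    cent_add h (cent_add h (cent_gamma h a b) (cent_inv h (cent_gamma h a b)))
      (cent_inv h (cent_inv h (cent_gamma h a b)))
  have h3 : g a + g b = g (a + b) + g (γ a b + g⁻¹ (γ a b) + g⁻¹ (g⁻¹ (γ a b))) := by
    calc g a + g b = g (g⁻¹ (g a + g b)) := (Equiv.Perm.apply_inv_self _ _).symm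
      _ = g ((a + b) + (γ a b + g⁻¹ (γ a b) + g⁻¹ (g⁻¹ (γ a b)))) := by rw [h1]
      _ = _ := g_add_cent h hD _
  have h4 : g (γ a b + g⁻¹ (γ a b) + g⁻¹ (g⁻¹ (γ a b)))
      = g (γ a b) + γ a b + g⁻¹ (γ a b) := by
    rw [g_add_cent h (cent_inv h (cent_inv h (cent_gamma h a b))),
      g_add_cent h (cent_inv h (cent_gamma h a b)),
      Equiv.Perm.apply_inv_self, Equiv.Perm.apply_inv_self]
  have tors3 : (g (γ a b) + γ a b + g⁻¹ (γ a b)) + (g (γ a b) + γ a b + g⁻¹ (γ a b)) = 0 := by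
    have t1 : g (γ a b) + g (γ a b) = 0 := by rw [gamma_apply h]; exact two_gamma h _ _
    have t2 : γ a b + γ a b = 0 := two_gamma h a b
    have t3 : g⁻¹ (γ a b) + g⁻¹ (γ a b) = 0 := by rw [gamma_inv_apply h]; exact two_gamma h _ _
    calc (g (γ a b) + γ a b + g⁻¹ (γ a b)) + (g (γ a b) + γ a b + g⁻¹ (γ a b))
        = (g (γ a b) + g (γ a b)) + (γ a b + γ a b) + (g⁻¹ (γ a b) + g⁻¹ (γ a b)) := by abel
      _ = 0 := by rw [t1, t2, t3]; simp
  rw [Esum_neg1_2]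
  have h5 : g (a + b) = g a + g b - g (γ a b + g⁻¹ (γ a b) + g⁻¹ (g⁻¹ (γ a b))) := by
    rw [h3]; abel
  rw [h4] at h5
  rw [h5, sub_eq_add_neg, neg_eq_of_add_eq_zero_left tors3]

lemma g_add (n : ℤ) (a b : X) :
    (g ^ n) (a + b) = (g ^ n) a + (g ^ n) b + Esum g (-n) (2*n) (γ a b) := by
  have hγab := cent_gamma h a b
  have htors := tors_gamma h a b
  induction n using Int.induction_on with
  | zero => simp [Esum_diag]
  | succ i ih =>
    have e1 : (g ^ ((i:ℤ)+1)) (a+b) = g ((g^(i:ℤ)) (a+b)) := by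
      rw [show ((i:ℤ)+1) = 1 + (i:ℤ) by ring, zpow_apply_add, zpow_one]
    have e2 : g ((g^(i:ℤ)) (a+b))
        = g ((g^(i:ℤ)) a + (g^(i:ℤ)) b) + g (Esum g (-(i:ℤ)) (2*(i:ℤ)) (γ a b)) := by
      rw [ih, g_add_cent h (cent_Esum h hγab _ _)]
    have e3 : g ((g^(i:ℤ)) a + (g^(i:ℤ)) b)
        = g ((g^(i:ℤ)) a) + g ((g^(i:ℤ)) b) + Esum g (2*(i:ℤ)-1) (2*(i:ℤ)+2) (γ a b) := by
      rw [g_add1 h, c3' h, c3r h, ← zpow_apply_add, Esum_apply_zpow,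
        Esum_congr (g := g) (show (-1:ℤ) - (-(i:ℤ) + -(i:ℤ)) = 2*(i:ℤ)-1 by ring)
          (show (2:ℤ) - (-(i:ℤ) + -(i:ℤ)) = 2*(i:ℤ)+2 by ring)]
    have e4 : g (Esum g (-(i:ℤ)) (2*(i:ℤ)) (γ a b))
        = Esum g (-(i:ℤ)-1) (2*(i:ℤ)-1) (γ a b) := by
      calc g (Esum g (-(i:ℤ)) (2*(i:ℤ)) (γ a b))
          = (g ^ (1:ℤ)) (Esum g (-(i:ℤ)) (2*(i:ℤ)) (γ a b)) := by rw [zpow_one]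
        _ = _ := by rw [zpow_Esum h hγab]
    have e5a : g ((g^(i:ℤ)) a) = (g^((i:ℤ)+1)) a := by
      rw [show ((i:ℤ)+1) = 1 + (i:ℤ) by ring, zpow_apply_add, zpow_one]
    have e5b : g ((g^(i:ℤ)) b) = (g^((i:ℤ)+1)) b := by
      rw [show ((i:ℤ)+1) = 1 + (i:ℤ) by ring, zpow_apply_add, zpow_one]
    have etot : Esum g (-((i:ℤ)+1)) (2*((i:ℤ)+1)) (γ a b)
        = Esum g (-(i:ℤ)-1) (2*(i:ℤ)-1) (γ a b) + Esum g (2*(i:ℤ)-1) (2*(i:ℤ)+2) (γ a b) := by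
      rw [Esum_chasles htors]
      exact Esum_congr (by ring) (by ring) _
    rw [e1, e2, e3, e4, e5a, e5b, etot]
    abel
  | pred i ih =>
    have e1 : (g ^ (-(i:ℤ)-1)) (a+b) = g⁻¹ ((g^(-(i:ℤ))) (a+b)) := by
      rw [show (-(i:ℤ)-1) = (-1) + (-(i:ℤ)) by ring, zpow_apply_add, zpow_neg_one]
    have e2 : g⁻¹ ((g^(-(i:ℤ))) (a+b))
        = g⁻¹ ((g^(-(i:ℤ))) a + (g^(-(i:ℤ))) b) + g⁻¹ (Esum g (-(-(i:ℤ))) (2*(-(i:ℤ))) (γ a b)) := by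
      rw [ih, ginv_add_cent h (cent_Esum h hγab _ _)]
    have e3 : g⁻¹ ((g^(-(i:ℤ))) a + (g^(-(i:ℤ))) b)
        = g⁻¹ ((g^(-(i:ℤ))) a) + g⁻¹ ((g^(-(i:ℤ))) b)
          + Esum g (-2*(i:ℤ)+1) (-2*(i:ℤ)-2) (γ a b) := by
      rw [ginv_add h, c3' h, c3r h, ← zpow_apply_add, Esum_apply_zpow,
        Esum_congr (g := g) (show (1:ℤ) - (-(-(i:ℤ)) + -(-(i:ℤ))) = -2*(i:ℤ)+1 by ring)
          (show (-2:ℤ) - (-(-(i:ℤ)) + -(-(i:ℤ))) = -2*(i:ℤ)-2 by ring)]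
    have e4 : g⁻¹ (Esum g (-(-(i:ℤ))) (2*(-(i:ℤ))) (γ a b))
        = Esum g ((i:ℤ)+1) (-2*(i:ℤ)+1) (γ a b) := by
      calc g⁻¹ (Esum g (-(-(i:ℤ))) (2*(-(i:ℤ))) (γ a b))
          = (g ^ (-1:ℤ)) (Esum g (-(-(i:ℤ))) (2*(-(i:ℤ))) (γ a b)) := by rw [zpow_neg_one]
        _ = _ := by rw [zpow_Esum h hγab]; exact Esum_congr (by ring) (by ring) _
    have e5a : g⁻¹ ((g^(-(i:ℤ))) a) = (g^(-(i:ℤ)-1)) a := by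
      rw [show (-(i:ℤ)-1) = (-1) + (-(i:ℤ)) by ring, zpow_apply_add, zpow_neg_one]
    have e5b : g⁻¹ ((g^(-(i:ℤ))) b) = (g^(-(i:ℤ)-1)) b := by
      rw [show (-(i:ℤ)-1) = (-1) + (-(i:ℤ)) by ring, zpow_apply_add, zpow_neg_one]
    have etot : Esum g (-(-(i:ℤ)-1)) (2*(-(i:ℤ)-1)) (γ a b)
        = Esum g ((i:ℤ)+1) (-2*(i:ℤ)+1) (γ a b) + Esum g (-2*(i:ℤ)+1) (-2*(i:ℤ)-2) (γ a b) := by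
      rw [Esum_chasles htors]
      exact Esum_congr (by ring) (by ring) _
    rw [e1, e2, e3, e4, e5a, e5b, etot]
    abel

end gadd

section main
include h

omit h in
lemma cmul_eq (i j : ℤ) (p q : X) :
    cmul g γ (i, p) (j, q) = (i + j, (g ^ (-j)) p + q + Esum g (i + j) (-j) (γ p q)) := rfl

end main

end CP

theorem stmt_9 {X : Type*} [AddCommGroup X] (g : Equiv.Perm X) (γ : X → X → X)
    (h : IsConstructionPair g γ) (u v w : ℤ × X) :
    cmul g γ u (cmul g γ (cmul g γ v w) u) = cmul g γ (cmul g γ u v) (cmul g γ w u) := by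
  obtain ⟨a, x⟩ := u
  obtain ⟨b, y⟩ := v
  obtain ⟨c, z⟩ := w
  simp only [CP.cmul_eq, Prod.mk.injEq]
  constructor
  · ring
  · rw [h.symm z x]
    have hcα : CP.IsCent γ (γ y z) := CP.cent_gamma h y z
    have hcβ : CP.IsCent γ (γ x y) := CP.cent_gamma h x y
    have hcδ : CP.IsCent γ (γ x z) := CP.cent_gamma h x z
    have htα := CP.tors_gamma h y z
    have htβ := CP.tors_gamma h x y
    have htδ := CP.tors_gamma h x z
    have e1 : γ ((g ^ (-c)) y + z + CP.Esum g (b + c) (-c) (γ y z)) x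
        = (g ^ (-(-c))) (γ x y) + γ x z := by
      rw [h.add_left, h.add_left, CP.c3' h, h.symm y x, h.symm z x,
        CP.cent_Esum h hcα (b+c) (-c) x, add_zero]
    rw [e1]
    have e2 : CP.Esum g (b + c + a) (-a) ((g ^ (-(-c))) (γ x y) + γ x z)
        = CP.Esum g (a+b) (-a-c) (γ x y) + CP.Esum g (a+b+c) (-a) (γ x z) := by
      rw [CP.Esum_add h hcδ, CP.Esum_apply_zpow,
        show CP.Esum g (b + c + a - -(-c)) (-a - -(-c)) (γ x y)
          = CP.Esum g (a+b) (-a-c) (γ x y) from CP.Esum_congr (by ring) (by ring) _,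
        show CP.Esum g (b + c + a) (-a) (γ x z)
          = CP.Esum g (a+b+c) (-a) (γ x z) from CP.Esum_congr (by ring) rfl _]
    rw [e2]
    have e3 : (g ^ (-a)) ((g ^ (-c)) y + z + CP.Esum g (b + c) (-c) (γ y z))
        = (g ^ (-a + -c)) y + (g ^ (-a)) z
          + (CP.Esum g (a-c) (-2*a-c) (γ y z) + CP.Esum g (a+b+c) (a-c) (γ y z)) := by
      rw [CP.zpow_add_cent h (-a) (CP.cent_Esum h hcα _ _), CP.g_add h, CP.c3' h,
        CP.Esum_apply_zpow, ← CP.zpow_apply_add, CP.zpow_Esum h hcα,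
        show CP.Esum g (-(-a) - -(-c)) (2*(-a) - -(-c)) (γ y z)
          = CP.Esum g (a-c) (-2*a-c) (γ y z) from CP.Esum_congr (by ring) (by ring) _,
        show CP.Esum g (b + c - -a) (-c - -a) (γ y z)
          = CP.Esum g (a+b+c) (a-c) (γ y z) from CP.Esum_congr (by ring) (by ring) _]
      abel
    rw [e3]
    have e5 : γ x ((g ^ (-a + -c)) y + (g ^ (-a)) z
          + (CP.Esum g (a-c) (-2*a-c) (γ y z) + CP.Esum g (a+b+c) (a-c) (γ y z)) + x
          + (CP.Esum g (a+b) (-a-c) (γ x y) + CP.Esum g (a+b+c) (-a) (γ x z)))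
        = (g ^ (-(-a + -c))) (γ x y) + (g ^ (-(-a))) (γ x z) := by
      rw [h.add_right, h.add_right, h.add_right, h.add_right, CP.c3r h, CP.c3r h, h.alt,
        CP.cent_right h (CP.cent_add h (CP.cent_Esum h hcα _ _) (CP.cent_Esum h hcα _ _)) x,
        CP.cent_right h (CP.cent_add h (CP.cent_Esum h hcβ _ _) (CP.cent_Esum h hcδ _ _)) x]
      abel
    rw [e5]
    have e6 : CP.Esum g (a + (b + c + a)) (-(b + c + a))
          ((g ^ (-(-a + -c))) (γ x y) + (g ^ (-(-a))) (γ x z))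
        = CP.Esum g (a+b) (-2*a-b-2*c) (γ x y) + CP.Esum g (a+b+c) (-2*a-b-c) (γ x z) := by
      rw [CP.Esum_add h (CP.cent_zpow h hcδ _), CP.Esum_apply_zpow, CP.Esum_apply_zpow,
        show CP.Esum g (a + (b + c + a) - -(-a + -c)) (-(b + c + a) - -(-a + -c)) (γ x y)
          = CP.Esum g (a+b) (-2*a-b-2*c) (γ x y) from CP.Esum_congr (by ring) (by ring) _,
        show CP.Esum g (a + (b + c + a) - -(-a)) (-(b + c + a) - -(-a)) (γ x z)
          = CP.Esum g (a+b+c) (-2*a-b-c) (γ x z) from CP.Esum_congr (by ring) (by ring) _]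
    rw [e6]
    have f1 : γ ((g ^ (-b)) x + y + CP.Esum g (a + b) (-b) (γ x y))
          ((g ^ (-a)) z + x + CP.Esum g (c + a) (-a) (γ x z))
        = (g ^ (-(-b) + -(-a))) (γ x z) + (g ^ (-(-a))) (γ y z) + γ x y := by
      have z1 : ∀ t, γ (CP.Esum g (a+b) (-b) (γ x y)) t = 0 := CP.cent_Esum h hcβ _ _
      have z2 : ∀ t, γ t (CP.Esum g (c+a) (-a) (γ x z)) = 0 := fun t =>
        CP.cent_right h (CP.cent_Esum h hcδ _ _) t
      simp only [h.add_left, h.add_right, z1, z2, add_zero, zero_add]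
      simp only [CP.c3' h, CP.c3r h]
      rw [h.alt, CP.zpow_zero_apply h, h.symm y x, ← CP.zpow_apply_add]
      abel
    rw [f1]
    have f2 : CP.Esum g (a + b + (c + a)) (-(c + a))
          ((g ^ (-(-b) + -(-a))) (γ x z) + (g ^ (-(-a))) (γ y z) + γ x y)
        = CP.Esum g (a+c) (-2*a-b-c) (γ x z) + CP.Esum g (a+b+c) (-2*a-c) (γ y z)
          + CP.Esum g (2*a+b+c) (-a-c) (γ x y) := by
      rw [CP.Esum_add h hcβ, CP.Esum_add h (CP.cent_zpow h hcα _),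
        CP.Esum_apply_zpow, CP.Esum_apply_zpow,
        show CP.Esum g (a + b + (c + a) - (-(-b) + -(-a))) (-(c + a) - (-(-b) + -(-a))) (γ x z)
          = CP.Esum g (a+c) (-2*a-b-c) (γ x z) from CP.Esum_congr (by ring) (by ring) _,
        show CP.Esum g (a + b + (c + a) - -(-a)) (-(c + a) - -(-a)) (γ y z)
          = CP.Esum g (a+b+c) (-2*a-c) (γ y z) from CP.Esum_congr (by ring) (by ring) _,
        show CP.Esum g (a + b + (c + a)) (-(c + a)) (γ x y)
          = CP.Esum g (2*a+b+c) (-a-c) (γ x y) from CP.Esum_congr (by ring) (by ring) _]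
    rw [f2]
    have f3 : (g ^ (-(c + a))) ((g ^ (-b)) x + y + CP.Esum g (a + b) (-b) (γ x y))
        = (g ^ (-(c+a) + -b)) x + (g ^ (-(c+a))) y
          + (CP.Esum g (a+c-b) (-2*a-b-2*c) (γ x y) + CP.Esum g (2*a+b+c) (a+c-b) (γ x y)) := by
      rw [CP.zpow_add_cent h (-(c+a)) (CP.cent_Esum h hcβ _ _), CP.g_add h, CP.c3' h,
        CP.Esum_apply_zpow, ← CP.zpow_apply_add, CP.zpow_Esum h hcβ,
        show CP.Esum g (-(-(c + a)) - -(-b)) (2*(-(c + a)) - -(-b)) (γ x y)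
          = CP.Esum g (a+c-b) (-2*a-b-2*c) (γ x y) from CP.Esum_congr (by ring) (by ring) _,
        show CP.Esum g (a + b - -(c + a)) (-b - -(c + a)) (γ x y)
          = CP.Esum g (2*a+b+c) (a+c-b) (γ x y) from CP.Esum_congr (by ring) (by ring) _]
      abel
    rw [f3]
    rw [show CP.Esum g (c+a) (-a) (γ x z) = CP.Esum g (a+c) (-a) (γ x z)
      from CP.Esum_congr (by ring) rfl _]
    rw [show (-(b + c + a)) = -(a+b+c) by ring, show (-(c+a) + -b) = -(a+b+c) by ring,
      show (-a + -c) = -(a+c) by ring, show (-(c+a)) = -(a+c) by ring]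
    have hB1 : CP.Esum g (a+c-b) (2*a+b+c) (γ x y) + CP.Esum g (2*a+b+c) (-a-c) (γ x y)
        = CP.Esum g (a+c-b) (-a-c) (γ x y) := CP.Esum_chasles htβ _ _ _
    have hB2 : CP.Esum g (-a-c) (a+c-b) (γ x y) + CP.Esum g (a+c-b) (-2*a-b-2*c) (γ x y)
        = CP.Esum g (-a-c) (-2*a-b-2*c) (γ x y) := CP.Esum_chasles htβ _ _ _
    have hD : CP.Esum g (-a) (a+c) (γ x z) + CP.Esum g (a+c) (-2*a-b-c) (γ x z)
        = CP.Esum g (-a) (-2*a-b-c) (γ x z) := CP.Esum_chasles htδ _ _ _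
    calc _ = (((g ^ (-(a+b+c))) x + x + (g ^ (-(a+c))) y + (g ^ (-a)) z)
          + ((CP.Esum g (a+b+c) (a-c) (γ y z) + CP.Esum g (a-c) (-2*a-c) (γ y z))
            + ((CP.Esum g (-a-c) (a+b) (γ x y) + CP.Esum g (a+b) (-2*a-b-2*c) (γ x y))
              + (CP.Esum g (-a) (a+b+c) (γ x z) + CP.Esum g (a+b+c) (-2*a-b-c) (γ x z))))) := by
          rw [CP.Esum_symm (g := g) (a+b) (-a-c) (γ x y), CP.Esum_symm (g := g) (a+b+c) (-a) (γ x z)]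
          abel
      _ = (((g ^ (-(a+b+c))) x + x + (g ^ (-(a+c))) y + (g ^ (-a)) z)
          + (CP.Esum g (a+b+c) (-2*a-c) (γ y z)
            + (CP.Esum g (-a-c) (-2*a-b-2*c) (γ x y) + CP.Esum g (-a) (-2*a-b-c) (γ x z)))) := by
        rw [CP.Esum_chasles htα, CP.Esum_chasles htβ, CP.Esum_chasles htδ]
      _ = _ := by
        rw [← hB2, ← hD, CP.Esum_symm (g := g) (-a-c) (a+c-b) (γ x y), ← hB1,
          CP.Esum_symm (g := g) (a+c-b) (2*a+b+c) (γ x y), CP.Esum_symm (g := g) (-a) (a+c) (γ x z)]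
        abel
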